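/- Let C ⊂ ℝ³ be a C² injective compact curve. Then there exists ε > 0 such that for every x ∈ ℝ³ with infDist x C < ε there exists a unique point y ∈ C with dist x y = infDist x C. -/

import Mathlib

open MeasureTheory Metric Set Filter
open scoped RealInnerProductSpace ContDiff SchwartzMap

noncomputable section

abbrev E3 := EuclideanSpace ℝ (Fin 3)

/-- A C² injective compact curve has a tubular neighborhood in which every point
has a unique nearest point on the curve. -/
theorem unique_nearest_point_of_C2_curve
    (γ : ℝ → E3) (L : ℝ) (hL : 0 < L)
    (hγ : ContDiff ℝ 2 γ) (hγinj : Set.InjOn γ (Set.Icc 0 L))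
    (harc : ∀ s ∈ Set.Icc (0:ℝ) L, ‖deriv γ s‖ = 1)
    (C : Set E3) (hC : C = γ '' Set.Icc 0 L) :
    ∃ ε > 0, ∀ x : E3, Metric.infDist x C < ε →
      ∃! y, y ∈ C ∧ dist x y = Metric.infDist x C := by
  subst hC
  have h1 : ContDiff ℝ 1 (deriv γ) :=
    ((contDiff_succ_iff_deriv (n := 1)).mp (by exact_mod_cast hγ)).2.2
  have hdγ : Differentiable ℝ γ := hγ.differentiable (by norm_num)
  have hdγ' : Differentiable ℝ (deriv γ) := h1.differentiable (by norm_num)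
  have hcγ'' : Continuous (deriv (deriv γ)) := h1.continuous_deriv le_rfl
  obtain ⟨K, hK⟩ : ∃ K, ∀ u ∈ Icc (0:ℝ) L, ‖deriv (deriv γ) u‖ ≤ K :=
    isCompact_Icc.exists_bound_of_continuousOn hcγ''.continuousOn
  set K' : ℝ := max K 1 with hK'def
  have hK'pos : (0:ℝ) < K' := lt_of_lt_of_le one_pos (le_max_right _ _)
  have hK'' : ∀ u ∈ Icc (0:ℝ) L, ‖deriv (deriv γ) u‖ ≤ K' :=
    fun u hu => (hK u hu).trans (le_max_left _ _)
  set δ : ℝ := 1 / (4 * K') with hδdef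
  have hδpos : 0 < δ := by positivity
  -- modulus of injectivity
  obtain ⟨η, hηpos, hη⟩ : ∃ η > 0, ∀ s ∈ Icc (0:ℝ) L, ∀ t ∈ Icc (0:ℝ) L,
      dist (γ s) (γ t) < η → |s - t| < δ := by
    set S : Set (ℝ × ℝ) := (Icc (0:ℝ) L ×ˢ Icc (0:ℝ) L) ∩ {p | δ ≤ |p.1 - p.2|} with hSdef
    have hScl : IsCompact S := (isCompact_Icc.prod isCompact_Icc).inter_right
      (isClosed_le continuous_const ((continuous_fst.sub continuous_snd).abs))
    by_cases hS : S.Nonempty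
    · obtain ⟨p, hpS, hpmin⟩ := hScl.exists_isMinOn hS
        ((hγ.continuous.comp continuous_fst).dist (hγ.continuous.comp continuous_snd)).continuousOn
      have hpne : γ p.1 ≠ γ p.2 := by
        intro h
        have h12 : p.1 = p.2 := hγinj hpS.1.1 hpS.1.2 h
        have h2 : δ ≤ |p.1 - p.2| := hpS.2
        rw [h12, sub_self, abs_zero] at h2
        exact absurd h2 (not_le.mpr hδpos)
      refine ⟨dist (γ p.1) (γ p.2), dist_pos.mpr hpne, fun s hs t ht hd => ?_⟩
      by_contra hcon
      push_neg at hcon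
      have : (s, t) ∈ S := ⟨⟨hs, ht⟩, hcon⟩
      exact absurd (hpmin this) (not_le.mpr hd)
    · refine ⟨1, one_pos, fun s hs t ht _ => ?_⟩
      by_contra hcon
      push_neg at hcon
      exact hS ⟨(s, t), ⟨hs, ht⟩, hcon⟩
  set ε : ℝ := min (1 / (8 * K')) (η / 2) with hεdef
  have hεpos : 0 < ε := lt_min (by positivity) (by positivity)
  refine ⟨ε, hεpos, fun x hx => ?_⟩
  have hCc : IsCompact (γ '' Icc 0 L) := isCompact_Icc.image hγ.continuous
  have hCne : (γ '' Icc 0 L).Nonempty := ⟨γ 0, mem_image_of_mem _ (left_mem_Icc.mpr hL.le)⟩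
  obtain ⟨y, hyC, hyd⟩ := hCc.exists_infDist_eq_dist hCne x
  set d : ℝ := infDist x (γ '' Icc 0 L) with hddef
  have hd0 : 0 ≤ d := infDist_nonneg
  -- key: any two feet coincide
  have key : ∀ s ∈ Icc (0:ℝ) L, ∀ t ∈ Icc (0:ℝ) L, dist x (γ s) = d → dist x (γ t) = d →
      s < t → False := by
    intro s hs t ht hds hdt hst
    -- parameters are close
    have hstδ : |s - t| < δ := by
      refine hη s hs t ht ?_
      calc dist (γ s) (γ t) ≤ dist (γ s) x + dist x (γ t) := dist_triangle _ _ _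
        _ = d + d := by rw [dist_comm, hds, hdt]
        _ < ε + ε := by linarith [hx]
        _ ≤ η := by
            have := min_le_right (1 / (8 * K')) (η / 2)
            rw [← hεdef] at this
            linarith
    have hIsub : Icc s t ⊆ Icc (0:ℝ) L := Icc_subset_Icc hs.1 ht.2
    -- the squared distance function
    set f : ℝ → ℝ := fun u => ⟪x - γ u, x - γ u⟫ with hfdef
    have hfnorm : ∀ u, f u = ‖x - γ u‖ ^ 2 := fun u => real_inner_self_eq_norm_sq _
    have hgu : ∀ u : ℝ, HasDerivAt (fun v => x - γ v) (-(deriv γ u)) u :=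
      fun u => (hdγ u).hasDerivAt.const_sub x
    have hf' : ∀ u, HasDerivAt f (-(2 * ⟪x - γ u, deriv γ u⟫)) u := by
      intro u
      have h := (hgu u).inner ℝ (hgu u)
      refine h.congr_deriv ?_
      rw [inner_neg_left, inner_neg_right, real_inner_comm]
      ring
    have hderivf : deriv f = fun u => -(2 * ⟪x - γ u, deriv γ u⟫) :=
      funext fun u => (hf' u).deriv
    have hf'' : ∀ u, HasDerivAt (deriv f)
        (2 * (‖deriv γ u‖ ^ 2 - ⟪x - γ u, deriv (deriv γ) u⟫)) u := by
      intro u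
      rw [hderivf]
      have h := ((hgu u).inner ℝ (hdγ' u).hasDerivAt).const_mul (2:ℝ)
      have h2 := h.neg
      refine h2.congr_deriv ?_
      rw [inner_neg_left, real_inner_self_eq_norm_sq]
      ring
    -- strict convexity on [s,t]
    have hfc : Continuous f := by
      apply Continuous.inner <;> exact continuous_const.sub hγ.continuous
    have hconv : StrictConvexOn ℝ (Icc s t) f := by
      refine strictConvexOn_of_deriv2_pos (convex_Icc s t) hfc.continuousOn ?_
      intro u hu
      rw [interior_Icc] at hu
      have huI : u ∈ Icc (0:ℝ) L := hIsub ⟨hu.1.le, hu.2.le⟩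
      have hiter : deriv^[2] f u = deriv (deriv f) u := by
        simp [Function.iterate_succ_apply']
      rw [hiter, (hf'' u).deriv]
      have hnorm1 : ‖deriv γ u‖ = 1 := harc u huI
      -- bound on ⟪x - γ u, γ'' u⟫
      have hxu : ‖x - γ u‖ ≤ ε + δ := by
        have hlip : ‖γ u - γ s‖ ≤ 1 * ‖u - s‖ := by
          refine Convex.norm_image_sub_le_of_norm_deriv_le
            (fun v hv => hdγ v) (fun v hv => le_of_eq (harc v hv)) (convex_Icc 0 L) ?_ huI
          exact hs
        have hus : ‖u - s‖ ≤ δ := by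
          rw [Real.norm_eq_abs, abs_of_pos (by linarith [hu.1] : (0:ℝ) < u - s)]
          have : |s - t| = t - s := by rw [abs_of_nonpos (by linarith)]; ring
          linarith [hu.2, hstδ, this ▸ hstδ]
        calc ‖x - γ u‖ ≤ ‖x - γ s‖ + ‖γ s - γ u‖ := by
              have := norm_sub_le_norm_sub_add_norm_sub x (γ s) (γ u)
              exact this
          _ ≤ d + δ := by
              rw [← dist_eq_norm, hds]
              have h3 : ‖γ s - γ u‖ ≤ δ := by
                rw [norm_sub_rev]
                calc ‖γ u - γ s‖ ≤ 1 * ‖u - s‖ := hlip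
                  _ = ‖u - s‖ := one_mul _
                  _ ≤ δ := hus
              linarith
          _ ≤ ε + δ := by linarith [hx]
      have hinner : ⟪x - γ u, deriv (deriv γ) u⟫ ≤ (ε + δ) * K' := by
        calc ⟪x - γ u, deriv (deriv γ) u⟫ ≤ ‖x - γ u‖ * ‖deriv (deriv γ) u‖ :=
              real_inner_le_norm _ _
          _ ≤ (ε + δ) * K' := by
              apply mul_le_mul hxu (hK'' u huI) (norm_nonneg _)
              positivity
      have hεK : ε ≤ 1 / (8 * K') := min_le_left _ _
      have hbound : (ε + δ) * K' ≤ 3 / 8 := by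
        have : (ε + δ) * K' ≤ (1 / (8 * K') + 1 / (4 * K')) * K' := by
          apply mul_le_mul_of_nonneg_right _ hK'pos.le
          rw [hδdef]
          linarith
        calc (ε + δ) * K' ≤ (1 / (8 * K') + 1 / (4 * K')) * K' := this
          _ = 3 / 8 := by field_simp; ring
      rw [hnorm1]
      nlinarith
    -- contradiction with minimality
    have hmid : (1/2 : ℝ) * s + (1/2 : ℝ) * t ∈ Icc (0:ℝ) L := by
      constructor <;> [nlinarith [hs.1, ht.1]; nlinarith [hs.2, ht.2]]
    have hfm : d ^ 2 ≤ f ((1/2 : ℝ) * s + (1/2 : ℝ) * t) := by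
      rw [hfnorm, ← dist_eq_norm]
      have hdle : d ≤ dist x (γ ((1/2 : ℝ) * s + (1/2 : ℝ) * t)) :=
        infDist_le_dist_of_mem (mem_image_of_mem _ hmid)
      exact pow_le_pow_left₀ hd0 hdle 2
    have hfs : f s = d ^ 2 := by rw [hfnorm, ← dist_eq_norm, hds]
    have hft : f t = d ^ 2 := by rw [hfnorm, ← dist_eq_norm, hdt]
    have hlt := hconv.2 (left_mem_Icc.mpr hst.le) (right_mem_Icc.mpr hst.le) hst.ne
      (by norm_num : (0:ℝ) < 1/2) (by norm_num : (0:ℝ) < 1/2) (by norm_num)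
    simp only [smul_eq_mul, hfs, hft] at hlt
    nlinarith
  refine ⟨y, ⟨hyC, hyd.symm⟩, ?_⟩
  rintro z ⟨hzC, hzd⟩
  obtain ⟨t, ht, rfl⟩ := hzC
  obtain ⟨s, hs, rfl⟩ := hyC
  have heq : t = s := by
    rcases lt_trichotomy t s with h | h | h
    · exact absurd (key t ht s hs hzd hyd.symm h) not_false
    · exact h
    · exact absurd (key s hs t ht hyd.symm hzd h) not_false
  rw [heq]
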